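/- ℒ(RDFAwtl) ⊊ ℒ(nr-DFAwtl): the class of languages accepted by repetitive DFAwtls is strictly contained in the class accepted by non-returning (repetitive) deterministic finite automata with translucent letters; a witness is L₂ = { aⁿbⁿ : n ≥ 0 }, which is accepted by an nr-DFAwtl but by no NFAwtl (hence by no RDFAwtl, since ℒ(RDFAwtl) ⊆ ℒ(RNFAwtl) = ℒ(NFAwtl)). -/

import Mathlib

/-- A nondeterministic finite automaton with translucent letters (NFAwtl). -/
structure NFAwtl (Q α : Type) where
  τ : Q → Set α
  I : Set Q
  F : Set Q
  δ : Q → α → Set Q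
  tr : ∀ q a, a ∈ τ q → δ q a = ∅

namespace NFAwtl

variable {Q α : Type}

/-- One computation step of an NFAwtl: delete the leftmost non-translucent letter
and change state (the head returns to the left end). -/
def Step (A : NFAwtl Q α) : Q × List α → Q × List α → Prop := fun c c' =>
  ∃ u a v, c.2 = u ++ a :: v ∧ (∀ x ∈ u, x ∈ A.τ c.1) ∧ a ∉ A.τ c.1 ∧
    c'.1 ∈ A.δ c.1 a ∧ c'.2 = u ++ v

/-- Acceptance: from some initial state, reach a configuration whose remaining
letters are all translucent for a final state. -/
def Accepts (A : NFAwtl Q α) (w : List α) : Prop :=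
  ∃ q₀ ∈ A.I, ∃ q w', Relation.ReflTransGen A.Step (q₀, w) (q, w') ∧
    (∀ x ∈ w', x ∈ A.τ q) ∧ q ∈ A.F

def lang (A : NFAwtl Q α) : Set (List α) := { w | A.Accepts w }

/-- A DFAwtl: single initial state and at most one transition per state/letter. -/
def Deterministic (A : NFAwtl Q α) : Prop :=
  (∃ q₀, A.I = {q₀}) ∧ ∀ q a, (A.δ q a).Subsingleton

end NFAwtl

/-- A repetitive NFAwtl (RNFAwtl): on the end-of-tape marker it may accept
(states in `Facc`) or change state via `δend` and continue. -/
structure RNFAwtl (Q α : Type) where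
  τ : Q → Set α
  I : Set Q
  δ : Q → α → Set Q
  δend : Q → Set Q
  Facc : Set Q
  tr : ∀ q a, a ∈ τ q → δ q a = ∅
  accEnd : ∀ q, q ∈ Facc → δend q = ∅

namespace RNFAwtl

variable {Q α : Type}

/-- One computation step of an RNFAwtl: either delete the leftmost
non-translucent letter, or, when all remaining letters are translucent,
change state via a `◁`-transition and continue. -/
def Step (A : RNFAwtl Q α) : Q × List α → Q × List α → Prop := fun c c' =>
  (∃ u a v, c.2 = u ++ a :: v ∧ (∀ x ∈ u, x ∈ A.τ c.1) ∧ a ∉ A.τ c.1 ∧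
    c'.1 ∈ A.δ c.1 a ∧ c'.2 = u ++ v)
  ∨ ((∀ x ∈ c.2, x ∈ A.τ c.1) ∧ c'.1 ∈ A.δend c.1 ∧ c'.2 = c.2)

def Accepts (A : RNFAwtl Q α) (w : List α) : Prop :=
  ∃ q₀ ∈ A.I, ∃ q w', Relation.ReflTransGen A.Step (q₀, w) (q, w') ∧
    (∀ x ∈ w', x ∈ A.τ q) ∧ q ∈ A.Facc

def lang (A : RNFAwtl Q α) : Set (List α) := { w | A.Accepts w }

/-- An RDFAwtl: single initial state and deterministic transitions. -/
def Deterministic (A : RNFAwtl Q α) : Prop :=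
  (∃ q₀, A.I = {q₀}) ∧ (∀ q a, (A.δ q a).Subsingleton) ∧ ∀ q, (A.δend q).Subsingleton

end RNFAwtl

/-- A non-returning repetitive NFAwtl (nr-NFAwtl): the head continues from the
position of the last deleted letter; on the end-of-tape marker it may change
state and return the head to the left end. -/
structure NrNFAwtl (Q α : Type) where
  τ : Q → Set α
  I : Set Q
  δ : Q → α → Set Q
  δend : Q → Set Q
  Facc : Set Q
  tr : ∀ q a, a ∈ τ q → δ q a = ∅
  accEnd : ∀ q, q ∈ Facc → δend q = ∅

namespace NrNFAwtl

variable {Q α : Type}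

/-- Configurations are `(x, q, w)`: `x` is the already-skipped prefix, the head
is on the first letter of `w`. -/
def Step (A : NrNFAwtl Q α) :
    List α × Q × List α → List α × Q × List α → Prop := fun c c' =>
  (∃ u a v, c.2.2 = u ++ a :: v ∧ (∀ x ∈ u, x ∈ A.τ c.2.1) ∧ a ∉ A.τ c.2.1 ∧
    c'.2.1 ∈ A.δ c.2.1 a ∧ c'.1 = c.1 ++ u ∧ c'.2.2 = v)
  ∨ ((∀ x ∈ c.2.2, x ∈ A.τ c.2.1) ∧ c'.2.1 ∈ A.δend c.2.1 ∧ c'.1 = [] ∧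
    c'.2.2 = c.1 ++ c.2.2)

def Accepts (A : NrNFAwtl Q α) (w : List α) : Prop :=
  ∃ q₀ ∈ A.I, ∃ x q w', Relation.ReflTransGen A.Step ([], q₀, w) (x, q, w') ∧
    (∀ y ∈ w', y ∈ A.τ q) ∧ q ∈ A.Facc

def lang (A : NrNFAwtl Q α) : Set (List α) := { w | A.Accepts w }

def Deterministic (A : NrNFAwtl Q α) : Prop :=
  (∃ q₀, A.I = {q₀}) ∧ (∀ q a, (A.δ q a).Subsingleton) ∧ ∀ q, (A.δend q).Subsingleton

end NrNFAwtl

/-- A non-repetitive non-returning NFAwtl (nr-nr-NFAwtl): non-returning, and it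
must halt as soon as all remaining letters to the right are translucent. -/
structure NrnrNFAwtl (Q α : Type) where
  τ : Q → Set α
  I : Set Q
  F : Set Q
  δ : Q → α → Set Q
  tr : ∀ q a, a ∈ τ q → δ q a = ∅

namespace NrnrNFAwtl

variable {Q α : Type}

def Step (A : NrnrNFAwtl Q α) :
    List α × Q × List α → List α × Q × List α → Prop := fun c c' =>
  ∃ u a v, c.2.2 = u ++ a :: v ∧ (∀ x ∈ u, x ∈ A.τ c.2.1) ∧ a ∉ A.τ c.2.1 ∧
    c'.2.1 ∈ A.δ c.2.1 a ∧ c'.1 = c.1 ++ u ∧ c'.2.2 = v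

def Accepts (A : NrnrNFAwtl Q α) (w : List α) : Prop :=
  ∃ q₀ ∈ A.I, ∃ x q w', Relation.ReflTransGen A.Step ([], q₀, w) (x, q, w') ∧
    (∀ y ∈ w', y ∈ A.τ q) ∧ q ∈ A.F

def lang (A : NrnrNFAwtl Q α) : Set (List α) := { w | A.Accepts w }

def Deterministic (A : NrnrNFAwtl Q α) : Prop :=
  (∃ q₀, A.I = {q₀}) ∧ ∀ q a, (A.δ q a).Subsingleton

end NrnrNFAwtl

/-- Language classes. -/
def NFAwtlLangs (α : Type) [Fintype α] : Set (Set (List α)) :=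
  { L | ∃ (Q : Type) (_ : Fintype Q) (A : NFAwtl Q α), A.lang = L }

def DFAwtlLangs (α : Type) [Fintype α] : Set (Set (List α)) :=
  { L | ∃ (Q : Type) (_ : Fintype Q) (A : NFAwtl Q α), A.Deterministic ∧ A.lang = L }

def RNFAwtlLangs (α : Type) [Fintype α] : Set (Set (List α)) :=
  { L | ∃ (Q : Type) (_ : Fintype Q) (A : RNFAwtl Q α), A.lang = L }

def RDFAwtlLangs (α : Type) [Fintype α] : Set (Set (List α)) :=
  { L | ∃ (Q : Type) (_ : Fintype Q) (A : RNFAwtl Q α), A.Deterministic ∧ A.lang = L }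

def NrNFAwtlLangs (α : Type) [Fintype α] : Set (Set (List α)) :=
  { L | ∃ (Q : Type) (_ : Fintype Q) (A : NrNFAwtl Q α), A.lang = L }

def NrDFAwtlLangs (α : Type) [Fintype α] : Set (Set (List α)) :=
  { L | ∃ (Q : Type) (_ : Fintype Q) (A : NrNFAwtl Q α), A.Deterministic ∧ A.lang = L }

def NrnrNFAwtlLangs (α : Type) [Fintype α] : Set (Set (List α)) :=
  { L | ∃ (Q : Type) (_ : Fintype Q) (A : NrnrNFAwtl Q α), A.lang = L }

def NrnrDFAwtlLangs (α : Type) [Fintype α] : Set (Set (List α)) :=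
  { L | ∃ (Q : Type) (_ : Fintype Q) (A : NrnrNFAwtl Q α), A.Deterministic ∧ A.lang = L }

/-- The two-letter alphabet {a, b}. -/
inductive AB : Type
  | a | b
deriving DecidableEq

instance : Fintype AB := ⟨{AB.a, AB.b}, fun x => by cases x <;> simp⟩

/-- The language L₂ = { aⁿbⁿ : n ≥ 0 }. -/
def L2 : Set (List AB) :=
  { w | ∃ n, w = List.replicate n AB.a ++ List.replicate n AB.b }

open List

set_option linter.unnecessarySeqFocus false
set_option linter.unreachableTactic false
set_option linter.unusedTactic false

def rep (i j : ℕ) : List AB := replicate i AB.a ++ replicate j AB.b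

lemma ab_cases (x : AB) : x = AB.a ∨ x = AB.b := by cases x <;> simp

lemma mem_rep {x : AB} {i j : ℕ} (h : x ∈ rep i j) : (x = AB.a ∧ 1 ≤ i) ∨ (x = AB.b ∧ 1 ≤ j) := by
  rcases mem_append.1 h with h | h
  · left; rcases eq_of_mem_replicate h with rfl
    exact ⟨rfl, by cases i with | zero => simp at h | succ n => omega⟩
  · right; rcases eq_of_mem_replicate h with rfl
    exact ⟨rfl, by cases j with | zero => simp at h | succ n => omega⟩

lemma forall_rep {i j : ℕ} {S : Set AB} (ha : 1 ≤ i → AB.a ∈ S) (hb : 1 ≤ j → AB.b ∈ S) :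
    ∀ x ∈ rep i j, x ∈ S := by
  intro x hx
  rcases mem_rep hx with ⟨rfl, h⟩ | ⟨rfl, h⟩
  · exact ha h
  · exact hb h

lemma rep_decomp : ∀ (u : List AB) {i j : ℕ} {x : AB} {v : List AB},
    rep i j = u ++ x :: v →
    (∃ k, k < i ∧ u = replicate k AB.a ∧ x = AB.a ∧ v = replicate (i-k-1) AB.a ++ replicate j AB.b) ∨
    (∃ k, k < j ∧ u = replicate i AB.a ++ replicate k AB.b ∧ x = AB.b ∧ v = replicate (j-k-1) AB.b) := by
  intro u
  induction u with
  | nil =>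
    intro i j x v h
    cases i with
    | zero =>
      cases j with
      | zero => simp [rep] at h
      | succ j' =>
        right
        simp [rep, replicate_succ] at h
        exact ⟨0, by omega, by simp, h.1.symm, by simp [h.2]⟩
    | succ i' =>
      left
      simp [rep, replicate_succ] at h
      exact ⟨0, by omega, by simp, h.1.symm, by simpa [rep] using h.2.symm⟩
  | cons y u' ih =>
    intro i j x v h
    cases i with
    | zero =>
      cases j with
      | zero => simp [rep] at h
      | succ j' =>
        simp [rep, replicate_succ] at h
        obtain ⟨rfl, h2⟩ := h
        rcases ih (show rep 0 j' = u' ++ x :: v by simpa [rep] using h2) with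
          ⟨k, hk, _, _, _⟩ | ⟨k, hk, hu, hx, hv⟩
        · omega
        · right
          refine ⟨k+1, by omega, ?_, hx, ?_⟩
          · simp [rep] at hu; simp [replicate_succ, hu]
          · simpa [show j'+1-(k+1)-1 = j'-k-1 by omega] using hv
    | succ i' =>
      simp [rep, replicate_succ] at h
      obtain ⟨rfl, h2⟩ := h
      rcases ih (show rep i' j = u' ++ x :: v by simpa [rep] using h2) with
        ⟨k, hk, hu, hx, hv⟩ | ⟨k, hk, hu, hx, hv⟩
      · left
        refine ⟨k+1, by omega, by simp [replicate_succ, hu], hx, ?_⟩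
        simpa [show i'+1-(k+1)-1 = i'-k-1 by omega] using hv
      · right
        exact ⟨k, hk, by simp [replicate_succ, hu], hx, hv⟩

section Abstract
variable {Q : Type} (A : RNFAwtl Q AB)

/-- Abstract step system on (state, #a's, #b's). -/
inductive SIJ : Q × ℕ × ℕ → Q × ℕ × ℕ → Prop
  | ra {q q' i j} : AB.a ∉ A.τ q → q' ∈ A.δ q AB.a → SIJ (q, i+1, j) (q', i, j)
  | rb {q q' i j} : (i = 0 ∨ AB.a ∈ A.τ q) → AB.b ∉ A.τ q → q' ∈ A.δ q AB.b →
      SIJ (q, i, j+1) (q', i, j)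
  | re {q q' i j} : (i = 0 ∨ AB.a ∈ A.τ q) → (j = 0 ∨ AB.b ∈ A.τ q) → q' ∈ A.δend q →
      SIJ (q, i, j) (q', i, j)

/-- The sub-system with no b-reads. -/
inductive SA : Q × ℕ × ℕ → Q × ℕ × ℕ → Prop
  | ra {q q' i j} : AB.a ∉ A.τ q → q' ∈ A.δ q AB.a → SA (q, i+1, j) (q', i, j)
  | re {q q' i j} : (i = 0 ∨ AB.a ∈ A.τ q) → (j = 0 ∨ AB.b ∈ A.τ q) → q' ∈ A.δend q →
      SA (q, i, j) (q', i, j)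

variable {A}

lemma SA.toSIJ {c c'} (h : SA A c c') : SIJ A c c' := by
  cases h with
  | ra h1 h2 => exact SIJ.ra h1 h2
  | re h1 h2 h3 => exact SIJ.re h1 h2 h3

lemma runSA_toSIJ {c c'} (h : Relation.ReflTransGen (SA A) c c') :
    Relation.ReflTransGen (SIJ A) c c' := by
  induction h with
  | refl => exact .refl
  | tail _ hs ih => exact ih.tail (SA.toSIJ hs)

/-- Abstract step to concrete step. -/
lemma step_of_sij {c c' : Q × ℕ × ℕ} (h : SIJ A c c') :
    A.Step (c.1, rep c.2.1 c.2.2) (c'.1, rep c'.2.1 c'.2.2) := by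
  cases h with
  | @ra q q' i j h1 h2 =>
    left
    exact ⟨[], AB.a, rep i j, by simp [rep, replicate_succ], by simp, h1, h2, by simp⟩
  | @rb q q' i j h1 h2 h3 =>
    left
    refine ⟨replicate i AB.a, AB.b, replicate j AB.b, by simp [rep, replicate_succ], ?_, h2, h3, rfl⟩
    intro x hx
    rcases eq_of_mem_replicate hx with rfl
    rcases h1 with h1 | h1
    · simp [h1] at hx
    · exact h1
  | @re q q' i j h1 h2 h3 =>
    refine Or.inr ⟨?_, h3, rfl⟩
    show ∀ x ∈ rep i j, x ∈ A.τ q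
    exact forall_rep (fun hi => h1.resolve_left (by omega)) (fun hj => h2.resolve_left (by omega))

/-- Concrete step from a rep-configuration to abstract step. -/
lemma sij_of_step {q : Q} {i j} {c' : Q × List AB} (h : A.Step (q, rep i j) c') :
    ∃ q' i' j', c' = (q', rep i' j') ∧ SIJ A (q, i, j) (q', i', j') := by
  obtain ⟨q', w'⟩ := c'
  rcases h with ⟨u, x, v, he, hu, hx, hδ, hw⟩ | ⟨hall, hδ, hw⟩
  · simp only at hu hx hδ hw he
    rcases rep_decomp u he with ⟨k, hk, rfl, rfl, rfl⟩ | ⟨k, hk, rfl, rfl, rfl⟩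
    · -- read an a ; u must be empty
      have hk0 : k = 0 := by
        by_contra h0
        exact hx (hu AB.a (mem_replicate.2 ⟨h0, rfl⟩))
      subst hk0
      refine ⟨q', i-1, j, ?_, ?_⟩
      · simp only [Prod.mk.injEq, eq_self_iff_true, true_and]
        rw [hw]
        simp [rep]
      · have hi : i - 1 + 1 = i := by omega
        rw [show ((q,i,j) : Q × ℕ × ℕ) = (q, (i-1)+1, j) by rw [hi]]
        exact SIJ.ra hx hδ
    · -- read a b ; u must be exactly the a-block
      have hk0 : k = 0 := by
        by_contra h0
        exact hx (hu AB.b (mem_append_right _ (mem_replicate.2 ⟨h0, rfl⟩)))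
      subst hk0
      refine ⟨q', i, j-1, ?_, ?_⟩
      · simp only [Prod.mk.injEq, eq_self_iff_true, true_and]
        rw [hw]
        simp [rep]
      · have hia : i = 0 ∨ AB.a ∈ A.τ q := by
          cases i with
          | zero => exact Or.inl rfl
          | succ i' => exact Or.inr (hu AB.a (by simp [mem_replicate]))
        have hj : j - 1 + 1 = j := by omega
        rw [show ((q,i,j) : Q × ℕ × ℕ) = (q, i, (j-1)+1) by rw [hj]]
        exact SIJ.rb hia hx hδ
  · simp only at hall hδ hw
    refine ⟨q', i, j, by rw [Prod.mk.injEq]; exact ⟨rfl, hw⟩, ?_⟩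
    refine SIJ.re ?_ ?_ hδ
    · cases i with
      | zero => exact Or.inl rfl
      | succ i' => exact Or.inr (hall AB.a (by simp [rep, mem_replicate]))
    · cases j with
      | zero => exact Or.inl rfl
      | succ j' => exact Or.inr (hall AB.b (by simp [rep, mem_replicate]))

/-- Concrete runs from rep-configurations stay in rep form. -/
lemma runIJ_of_run {c₀ cf : Q × List AB} (h : Relation.ReflTransGen A.Step c₀ cf) :
    ∀ q i j, c₀ = (q, rep i j) →
      ∃ q' i' j', cf = (q', rep i' j') ∧ Relation.ReflTransGen (SIJ A) (q, i, j) (q', i', j') := by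
  induction h using Relation.ReflTransGen.head_induction_on with
  | refl => exact fun q i j h => ⟨q, i, j, h, Relation.ReflTransGen.refl⟩
  | head hstep _ ih =>
    rintro q i j rfl
    obtain ⟨q', i', j', rfl, hs⟩ := sij_of_step hstep
    obtain ⟨qf, if', jf', hcf, hrun⟩ := ih q' i' j' rfl
    exact ⟨qf, if', jf', hcf, Relation.ReflTransGen.head hs hrun⟩

lemma run_of_runIJ {c₀ cf : Q × ℕ × ℕ} (h : Relation.ReflTransGen (SIJ A) c₀ cf) :
    Relation.ReflTransGen A.Step (c₀.1, rep c₀.2.1 c₀.2.2) (cf.1, rep cf.2.1 cf.2.2) := by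
  induction h with
  | refl => exact Relation.ReflTransGen.refl
  | tail hs hstep ih => exact Relation.ReflTransGen.tail ih (step_of_sij hstep)


lemma sa_mono {c c' : Q × ℕ × ℕ} (h : Relation.ReflTransGen (SA A) c c') :
    c'.2.1 ≤ c.2.1 ∧ c'.2.2 = c.2.2 := by
  induction h with
  | refl => exact ⟨le_rfl, rfl⟩
  | tail _ hstep ih =>
    cases hstep with
    | ra h1 h2 => refine ⟨?_, ?_⟩ <;> simp_all <;> omega
    | re h1 h2 h3 => refine ⟨?_, ?_⟩ <;> simp_all

lemma run_split {c cf : Q × ℕ × ℕ} (h : Relation.ReflTransGen (SIJ A) c cf) :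
    Relation.ReflTransGen (SA A) c cf ∨
    ∃ p i₁ p', Relation.ReflTransGen (SA A) c (p, i₁, c.2.2) ∧
      (i₁ = 0 ∨ AB.a ∈ A.τ p) ∧ AB.b ∉ A.τ p ∧ p' ∈ A.δ p AB.b ∧ 1 ≤ c.2.2 ∧
      Relation.ReflTransGen (SIJ A) (p', i₁, c.2.2 - 1) cf := by
  induction h using Relation.ReflTransGen.head_induction_on with
  | refl => exact Or.inl .refl
  | @head c c₂ hstep hrun ih =>
    cases hstep with
    | @ra q q' i j h1 h2 =>
      rcases ih with ih | ⟨p, i₁, p', h3, h4, h5, h6, h7, h8⟩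
      · exact Or.inl (.head (SA.ra h1 h2) ih)
      · exact Or.inr ⟨p, i₁, p', .head (SA.ra h1 h2) h3, h4, h5, h6, h7, h8⟩
    | @rb q q' i j h1 h2 h3 =>
      exact Or.inr ⟨q, i, q', .refl, h1, h2, h3, by simp, hrun⟩
    | @re q q' i j h1 h2 h3 =>
      rcases ih with ih | ⟨p, i₁, p', h4, h5, h6, h7, h8, h9⟩
      · exact Or.inl (.head (SA.re h1 h2 h3) ih)
      · exact Or.inr ⟨p, i₁, p', .head (SA.re h1 h2 h3) h4, h5, h6, h7, h8, h9⟩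

lemma sa_shift {q' : Q} {i' j : ℕ} (d : ℕ) (hd : d ≤ i') :
    ∀ {c : Q × ℕ × ℕ}, Relation.ReflTransGen (SA A) c (q', i', j) →
    Relation.ReflTransGen (SA A) (c.1, c.2.1 - d, c.2.2) (q', i' - d, j) := by
  intro c h
  induction h using Relation.ReflTransGen.head_induction_on with
  | refl => exact .refl
  | @head c c₂ hstep hrun ih =>
    cases hstep with
    | @ra q q₂ i j₂ h1 h2 =>
      have hi : i' ≤ i := by simpa using (sa_mono hrun).1
      show Relation.ReflTransGen (SA A) (q, i + 1 - d, j₂) (q', i' - d, j)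
      rw [show i + 1 - d = (i - d) + 1 by omega]
      exact .head (SA.ra h1 h2) ih
    | @re q q₂ i j₂ h1 h2 h3 =>
      show Relation.ReflTransGen (SA A) (q, i - d, j₂) (q', i' - d, j)
      refine .head (SA.re ?_ h2 h3) ih
      rcases h1 with h1 | h1
      · left; omega
      · right; exact h1

lemma sa_level {q' : Q} {i' j : ℕ} :
    ∀ {c : Q × ℕ × ℕ}, Relation.ReflTransGen (SA A) c (q', i', j) →
    ∀ m, i' ≤ m → m ≤ c.2.1 → c.2.2 = j →
    ∃ r, Relation.ReflTransGen (SA A) c (r, m, j) ∧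
      Relation.ReflTransGen (SA A) (r, m, j) (q', i', j) := by
  intro c h
  induction h using Relation.ReflTransGen.head_induction_on with
  | refl =>
    intro m h1 h2 h3
    have hm : m = i' := le_antisymm (by simpa using h2) h1
    subst hm
    exact ⟨q', .refl, .refl⟩
  | @head c c₂ hstep hrun ih =>
    cases hstep with
    | @ra q q₂ i j₂ h1 h2 =>
      intro m hm1 hm2 hm3
      simp only at hm2 hm3
      subst hm3
      by_cases hmi : m = i + 1
      · subst hmi
        exact ⟨q, .refl, .head (SA.ra h1 h2) hrun⟩
      · obtain ⟨r, hr1, hr2⟩ := ih m hm1 (by simp; omega) rfl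
        exact ⟨r, .head (SA.ra h1 h2) hr1, hr2⟩
    | @re q q₂ i j₂ h1 h2 h3 =>
      intro m hm1 hm2 hm3
      simp only at hm2 hm3
      subst hm3
      obtain ⟨r, hr1, hr2⟩ := ih m hm1 (by simpa using hm2) rfl
      exact ⟨r, .head (SA.re h1 h2 h3) hr1, hr2⟩

lemma sa_change_j {q' : Q} {i' j : ℕ} (J : ℕ) (hj : 1 ≤ j) :
    ∀ {c : Q × ℕ × ℕ}, Relation.ReflTransGen (SA A) c (q', i', j) →
    Relation.ReflTransGen (SA A) (c.1, c.2.1, J) (q', i', J) := by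
  intro c h
  induction h using Relation.ReflTransGen.head_induction_on with
  | refl => exact .refl
  | @head c c₂ hstep hrun ih =>
    cases hstep with
    | @ra q q₂ i j₂ h1 h2 =>
      exact .head (SA.ra h1 h2) ih
    | @re q q₂ i j₂ h1 h2 h3 =>
      have hj₂ : j₂ = j := by simpa using (sa_mono hrun).2.symm
      have hb : AB.b ∈ A.τ q := h2.resolve_left (by omega)
      exact .head (SA.re h1 (Or.inr hb) h3) ih

end Abstract

/-- Tape of the case-B witness: a^(m-1) b a b^(n-1). -/
def wtape (m n : ℕ) : List AB :=
  List.replicate (m-1) AB.a ++ AB.b :: AB.a :: List.replicate (n-1) AB.b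

lemma wtape_succ {m n : ℕ} (hm : 1 ≤ m) : wtape (m+1) n = AB.a :: wtape m n := by
  cases m with
  | zero => omega
  | succ k => simp [wtape, replicate_succ]

lemma rep_pull {m : ℕ} (hm : 1 ≤ m) (l : List AB) :
    replicate (m-1) AB.a ++ AB.a :: l = replicate m AB.a ++ l := by
  cases m with
  | zero => omega
  | succ k => simp [replicate_succ']

section Abstract2
variable {Q : Type} {A : RNFAwtl Q AB}

lemma run_wtape {n : ℕ} (hn : 1 ≤ n) {p : Q} {i₁ : ℕ} (hi₁ : 1 ≤ i₁) :
    ∀ {c : Q × ℕ × ℕ}, Relation.ReflTransGen (SA A) c (p, i₁, n) → c.2.2 = n →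
    Relation.ReflTransGen A.Step (c.1, wtape c.2.1 n) (p, wtape i₁ n) := by
  intro c h
  induction h using Relation.ReflTransGen.head_induction_on with
  | refl => exact fun _ => .refl
  | @head c c₂ hstep hrun ih =>
    cases hstep with
    | @ra q q₂ i j₂ h1 h2 =>
      intro hc
      simp only at hc
      subst j₂
      have hi : i₁ ≤ i := by simpa using (sa_mono hrun).1
      have hstep' : A.Step (q, wtape (i+1) n) (q₂, wtape i n) := by
        left
        exact ⟨[], AB.a, wtape i n, by rw [wtape_succ (by omega)]; rfl, by simp, h1, h2, by simp⟩
      exact .head hstep' (ih rfl)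
    | @re q q₂ i j₂ h1 h2 h3 =>
      intro hc
      simp only at hc
      subst j₂
      have hi : i₁ ≤ i := by simpa using (sa_mono hrun).1
      have ha : AB.a ∈ A.τ q := h1.resolve_left (by omega)
      have hb : AB.b ∈ A.τ q := h2.resolve_left (by omega)
      have hstep' : A.Step (q, wtape i n) (q₂, wtape i n) := by
        right
        refine ⟨?_, h3, rfl⟩
        intro x hx
        rcases ab_cases x with rfl | rfl
        · exact ha
        · exact hb
      exact .head hstep' (ih rfl)

end Abstract2

lemma count_rep_a (i j : ℕ) : (rep i j).count AB.a = i := by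
  simp [rep, count_append, count_replicate]

lemma count_rep_b (i j : ℕ) : (rep i j).count AB.b = j := by
  simp [rep, count_append, count_replicate]

lemma rep_mem_L2 {i j : ℕ} : rep i j ∈ L2 ↔ i = j := by
  constructor
  · rintro ⟨m, hm⟩
    have ha := count_rep_a i j
    have hb := count_rep_b i j
    rw [hm] at ha hb
    rw [show (List.replicate m AB.a ++ List.replicate m AB.b) = rep m m from rfl] at ha hb
    rw [count_rep_a] at ha
    rw [count_rep_b] at hb
    omega
  · rintro rfl; exact ⟨i, rfl⟩

lemma wtape_not_mem_L2 {n : ℕ} (hn : 1 ≤ n) : wtape n n ∉ L2 := by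
  rintro ⟨m, hm⟩
  have ha : (wtape n n).count AB.a = n := by
    simp [wtape, count_append, count_replicate, count_cons]
    omega
  have hm' : m = n := by
    have := ha
    rw [hm, count_append, count_replicate, count_replicate] at this
    simpa using this
  subst hm'
  have h1 : (wtape m m)[m-1]? = some AB.b := by
    rw [wtape, getElem?_append_right (by simp)]
    simp
  have h2 : (wtape m m)[m-1]? = some AB.a := by
    rw [hm, getElem?_append_left (by simp; omega)]
    rw [getElem?_replicate]
    simp
    omega
  rw [h1] at h2
  simp at h2

/-- The key impossibility result: no RNFAwtl with finitely many states
accepts L₂. -/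
theorem RNFAwtl_lang_ne_L2 {Q : Type} [Fintype Q] (A : RNFAwtl Q AB) : A.lang ≠ L2 := by
  intro hL
  set n := Fintype.card Q + 1 with hn
  have hn1 : 1 ≤ n := by omega
  have hmem : A.Accepts (rep n n) := by
    have : rep n n ∈ A.lang := by rw [hL]; exact ⟨n, rfl⟩
    exact this
  obtain ⟨q₀, hq₀, qf, w', hrun, htr, hF⟩ := hmem
  obtain ⟨qf, i', j', hw', habs⟩ := runIJ_of_run hrun q₀ n n rfl
  rw [Prod.mk.injEq] at hw'
  obtain ⟨rfl, rfl⟩ := hw'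
  rcases run_split habs with hruna | ⟨p, i₁, p', h1, h2, h3, h4, h5, h6⟩
  · -- Case A1: no b is ever read; then a^n b^(n+1) is also accepted
    have hj : j' = n := by simpa using (sa_mono hruna).2
    have hfb : AB.b ∈ A.τ qf := by
      apply htr
      rw [show rep i' j' = rep i' ((j'-1)+1) by rw [Nat.sub_add_cancel (by omega)]]
      simp [rep, mem_replicate]
    have hrun2 : Relation.ReflTransGen (SA A) (q₀, n, n+1) (qf, i', n+1) := by
      have := sa_change_j (A := A) (n+1) (by omega) hruna
      simpa using this
    have hacc : A.Accepts (rep n (n+1)) := by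
      refine ⟨q₀, hq₀, qf, rep i' (n+1), ?_, ?_, hF⟩
      · exact run_of_runIJ (runSA_toSIJ hrun2)
      · refine forall_rep (fun hi => ?_) (fun _ => hfb)
        apply htr
        rw [show rep i' j' = rep ((i'-1)+1) j' by rw [Nat.sub_add_cancel (by omega)]]
        simp [rep, mem_replicate]
    have : rep n (n+1) ∈ L2 := by rw [← hL]; exact hacc
    have := rep_mem_L2.1 this
    omega
  · -- a b is read at some point; h1 : run to (p, i₁, n), then b-read
    simp only at h1 h6
    rcases Nat.eq_zero_or_pos i₁ with hi0 | hi1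
    · -- Case A2: first b-read with no a's left: pump down the a's
      subst hi0
      have hlev : ∀ m : Fin (n+1), ∃ r,
          Relation.ReflTransGen (SA A) (q₀, n, n) (r, (m : ℕ), n) ∧
          Relation.ReflTransGen (SA A) (r, (m : ℕ), n) (p, 0, n) := by
        intro m
        exact sa_level h1 m (by omega) (by simp; omega) rfl
      choose g hg1 hg2 using hlev
      obtain ⟨x, y, hxy, hgxy⟩ := Fintype.exists_ne_map_eq_of_card_lt g (by simp [hn])
      have hvne : (x : ℕ) ≠ (y : ℕ) := fun h => hxy (Fin.val_injective h)
      obtain ⟨m₁, m₂, hlt, heq⟩ : ∃ m₁ m₂ : Fin (n+1), (m₁ : ℕ) < (m₂ : ℕ) ∧ g m₁ = g m₂ := by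
        rcases Nat.lt_or_ge (x : ℕ) (y : ℕ) with h | h
        · exact ⟨x, y, h, hgxy⟩
        · exact ⟨y, x, by omega, hgxy.symm⟩
      set d := (m₂ : ℕ) - (m₁ : ℕ) with hd
      have hshift := sa_shift (A := A) d (by omega) (hg1 m₂)
      simp only at hshift
      rw [show (m₂ : ℕ) - d = (m₁ : ℕ) by omega, ← heq] at hshift
      have hsarun : Relation.ReflTransGen (SA A) (q₀, n - d, n) (p, 0, n) :=
        hshift.trans (hg2 m₁)
      have hbstep : SIJ A (p, 0, n) (p', 0, n-1) := by
        rw [show n = (n-1)+1 by omega]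
        exact SIJ.rb (Or.inl rfl) h3 h4
      have habs2 : Relation.ReflTransGen (SIJ A) (q₀, n - d, n) (qf, i', j') :=
        (runSA_toSIJ hsarun).trans (Relation.ReflTransGen.head hbstep h6)
      have hacc : A.Accepts (rep (n - d) n) :=
        ⟨q₀, hq₀, qf, rep i' j', run_of_runIJ habs2, htr, hF⟩
      have : rep (n - d) n ∈ L2 := by rw [← hL]; exact hacc
      have := rep_mem_L2.1 this
      have hdn : d ≤ n := by omega
      omega
    · -- Case B: a b is read while an a remains: accept a^(n-1) b a b^(n-1)
      have hap : AB.a ∈ A.τ p := h2.resolve_left (by omega)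
      have hcon := run_wtape (A := A) hn1 hi1 h1 rfl
      have hbstep : A.Step (p, wtape i₁ n) (p', rep i₁ (n-1)) := by
        left
        refine ⟨replicate (i₁-1) AB.a, AB.b, AB.a :: replicate (n-1) AB.b, rfl, ?_, h3, h4, ?_⟩
        · intro x hx
          rcases eq_of_mem_replicate hx with rfl
          exact hap
        · show rep i₁ (n-1) = replicate (i₁-1) AB.a ++ AB.a :: replicate (n-1) AB.b
          rw [rep_pull hi1]
          rfl
      have htail := run_of_runIJ h6
      have hacc : A.Accepts (wtape n n) := by
        refine ⟨q₀, hq₀, qf, rep i' j', ?_, htr, hF⟩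
        exact hcon.trans (Relation.ReflTransGen.head hbstep htail)
      have : wtape n n ∈ L2 := by rw [← hL]; exact hacc
      exact wtape_not_mem_L2 hn1 this

/-- States of the nr-DFAwtl accepting L₂. -/
inductive St3 : Type
  | p0 | p1 | p2
deriving DecidableEq

instance : Fintype St3 := ⟨{St3.p0, St3.p1, St3.p2}, fun x => by cases x <;> simp⟩

/-- The nr-DFAwtl accepting L₂ = {aⁿbⁿ}. -/
def M2 : NrNFAwtl St3 AB where
  τ q := match q with
    | .p0 => ∅
    | .p1 => {AB.a}
    | .p2 => {AB.b}
  I := {.p0}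
  δ q x := match q, x with
    | .p0, AB.a => {.p1}
    | .p1, AB.b => {.p2}
    | _, _ => ∅
  δend q := match q with
    | .p2 => {.p0}
    | _ => ∅
  Facc := {.p0}
  tr := by rintro q x h; cases q <;> cases x <;> simp_all
  accEnd := by rintro q h; cases q <;> simp_all

lemma M2_run_step (n : ℕ) :
    Relation.ReflTransGen M2.Step ([], St3.p0, rep (n+1) (n+1)) ([], St3.p0, rep n n) := by
  have s1 : M2.Step ([], St3.p0, rep (n+1) (n+1)) ([], St3.p1, rep n (n+1)) := by
    left
    refine ⟨[], AB.a, rep n (n+1), by simp [rep, replicate_succ], by simp, by simp [M2], by simp [M2], by simp, rfl⟩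
  have s2 : M2.Step ([], St3.p1, rep n (n+1)) (replicate n AB.a, St3.p2, replicate n AB.b) := by
    left
    refine ⟨replicate n AB.a, AB.b, replicate n AB.b, by simp [rep, replicate_succ], ?_, by simp [M2], by simp [M2], by simp, rfl⟩
    intro x hx
    rcases eq_of_mem_replicate hx with rfl
    simp [M2]
  have s3 : M2.Step (replicate n AB.a, St3.p2, replicate n AB.b) ([], St3.p0, rep n n) := by
    right
    refine ⟨?_, by simp [M2], rfl, rfl⟩
    intro x hx
    rcases eq_of_mem_replicate hx with rfl
    simp [M2]
  exact ((Relation.ReflTransGen.single s1).tail s2).tail s3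

lemma M2_accepts_rep (n : ℕ) : M2.Accepts (rep n n) := by
  have hrun : ∀ n, Relation.ReflTransGen M2.Step ([], St3.p0, rep n n) ([], St3.p0, []) := by
    intro n
    induction n with
    | zero => exact Relation.ReflTransGen.refl
    | succ k ih => exact (M2_run_step k).trans ih
  exact ⟨.p0, rfl, [], .p0, [], hrun n, by simp, rfl⟩

/-- The invariant for soundness of M2. -/
def M2Inv (w : List AB) (c : List AB × St3 × List AB) : Prop :=
  (∃ v, c = ([], St3.p0, v) ∧ (v ∈ L2 ↔ w ∈ L2))
  ∨ (∃ v, c = ([], St3.p1, v) ∧ ((AB.a :: v) ∈ L2 ↔ w ∈ L2))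
  ∨ (∃ k v, c = (replicate k AB.a, St3.p2, v) ∧
      ((AB.a :: (replicate k AB.a ++ AB.b :: v)) ∈ L2 ↔ w ∈ L2))

lemma M2Inv_step {w : List AB} {c c'} (hc : M2Inv w c) (h : M2.Step c c') : M2Inv w c' := by
  obtain ⟨x', q', v'⟩ := c'
  rcases hc with ⟨v, rfl, hv⟩ | ⟨v, rfl, hv⟩ | ⟨k, v, rfl, hv⟩
  · -- at p0
    rcases h with ⟨u, y, t, he, hu, hy, hδ, hx, ht⟩ | ⟨hall, hδ, hx, ht⟩
    · have hu0 : u = [] := by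
        cases u with
        | nil => rfl
        | cons z u' => exact absurd (hu z (by simp)) (by simp [M2])
      subst hu0
      simp only at he hδ hx ht
      cases y with
      | a =>
        simp [M2] at hδ
        subst hδ
        right; left
        refine ⟨t, by simp [hx, ht], ?_⟩
        rw [← hv, he]
        simp
      | b => simp [M2] at hδ
    · simp [M2] at hδ
  · -- at p1
    rcases h with ⟨u, y, t, he, hu, hy, hδ, hx, ht⟩ | ⟨hall, hδ, hx, ht⟩
    · simp only at he hu hy hδ hx ht
      have hu' : ∃ k, u = replicate k AB.a := by
        refine ⟨u.length, (List.eq_replicate_iff.2 ⟨rfl, ?_⟩)⟩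
        intro z hz
        have := hu z hz
        simpa [M2] using this
      obtain ⟨k, rfl⟩ := hu'
      cases y with
      | a => exact absurd (by simp [M2] : AB.a ∈ M2.τ St3.p1) hy
      | b =>
        simp [M2] at hδ
        subst hδ
        right; right
        refine ⟨k, t, by simp [hx, ht], ?_⟩
        rw [← hv, he]
    · simp [M2] at hδ
  · -- at p2
    rcases h with ⟨u, y, t, he, hu, hy, hδ, hx, ht⟩ | ⟨hall, hδ, hx, ht⟩
    · simp only at he hu hy hδ hx ht
      -- any read letter from p2 has no transition
      cases y with
      | a => simp [M2] at hδ
      | b => exact absurd (by simp [M2] : AB.b ∈ M2.τ St3.p2) hy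
    · simp only at hall hδ hx ht
      simp [M2] at hδ
      subst hδ
      have hv' : v = replicate v.length AB.b := by
        refine List.eq_replicate_iff.2 ⟨rfl, ?_⟩
        intro z hz
        have := hall z hz
        simpa [M2] using this
      set m := v.length with hm
      rw [hv'] at hv
      have e1 : AB.a :: (replicate k AB.a ++ AB.b :: replicate m AB.b) = rep (k+1) (m+1) := by
        simp [rep, replicate_succ]
      rw [e1, rep_mem_L2] at hv
      left
      refine ⟨replicate k AB.a ++ v, by simp [hx, ht], ?_⟩
      rw [hv', show (replicate k AB.a ++ replicate m AB.b) = rep k m from rfl, rep_mem_L2, ← hv]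
      omega

lemma M2Inv_run {w : List AB} {c c'} (hc : M2Inv w c) (h : Relation.ReflTransGen M2.Step c c') :
    M2Inv w c' := by
  induction h with
  | refl => exact hc
  | tail _ hstep ih => exact M2Inv_step ih hstep

lemma M2_lang : M2.lang = L2 := by
  ext w
  constructor
  · rintro ⟨q₀, hq₀, x, q, w', hrun, htr, hF⟩
    have hq₀' : q₀ = St3.p0 := hq₀
    subst hq₀'
    have hq : q = St3.p0 := hF
    subst hq
    have hw' : w' = [] := by
      cases w' with
      | nil => rfl
      | cons z t => exact absurd (htr z (by simp)) (by simp [M2])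
    subst hw'
    have hinv : M2Inv w (x, St3.p0, []) :=
      M2Inv_run (Or.inl ⟨w, rfl, Iff.rfl⟩) hrun
    rcases hinv with ⟨v, he, hv⟩ | ⟨v, he, hv⟩ | ⟨k, v, he, hv⟩
    · rw [Prod.mk.injEq, Prod.mk.injEq] at he
      obtain ⟨-, -, rfl⟩ := he
      exact hv.1 ⟨0, rfl⟩
    · simp [Prod.ext_iff] at he
    · simp [Prod.ext_iff] at he
  · rintro ⟨n, rfl⟩
    exact M2_accepts_rep n

lemma M2_det : M2.Deterministic := by
  refine ⟨⟨.p0, rfl⟩, ?_, ?_⟩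
  · rintro q x
    cases q <;> cases x <;> simp [M2, Set.Subsingleton] <;> intros <;> simp_all
  · intro q
    cases q <;> simp [M2, Set.Subsingleton] <;> intros <;> simp_all


/-- Simulation of an RNFAwtl by a non-returning repetitive NFAwtl: states
`inl q` behave like `q`, states `inr q` sweep to the end of the tape (all
letters translucent) and return the head to the left end, entering `q`. -/
def RNFAwtl.toNr {Q α : Type} (A : RNFAwtl Q α) : NrNFAwtl (Q ⊕ Q) α where
  τ s := match s with
    | .inl q => A.τ q
    | .inr _ => Set.univ
  I := Sum.inl '' A.I
  δ s x := match s with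
    | .inl q => Sum.inr '' A.δ q x
    | .inr _ => ∅
  δend s := match s with
    | .inl q => Sum.inl '' A.δend q
    | .inr q => {Sum.inl q}
  Facc := Sum.inl '' A.Facc
  tr := by
    rintro s x h
    cases s with
    | inl q => simp only; rw [A.tr q x h]; simp
    | inr q => rfl
  accEnd := by
    rintro s hs
    cases s with
    | inl q =>
      obtain ⟨q', hq', he⟩ := hs
      simp only
      rw [show q = q' from (Sum.inl_injective he).symm, A.accEnd q' hq']
      simp
    | inr q => simp at hs

namespace RNFAwtl
variable {Q α : Type} {A : RNFAwtl Q α}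

/-- Each step of the RNFAwtl is simulated by one or two steps of its
non-returning version. -/
lemma toNr_step {c c' : Q × List α} (h : A.Step c c') :
    Relation.ReflTransGen A.toNr.Step ([], Sum.inl c.1, c.2) ([], Sum.inl c'.1, c'.2) := by
  rcases h with ⟨u, x, v, he, hu, hx, hδ, hw⟩ | ⟨hall, hδ, hw⟩
  · have s1 : A.toNr.Step ([], Sum.inl c.1, c.2) (u, Sum.inr c'.1, v) := by
      left
      exact ⟨u, x, v, he, hu, hx, ⟨c'.1, hδ, rfl⟩, by simp, rfl⟩
    have s2 : A.toNr.Step (u, Sum.inr c'.1, v) ([], Sum.inl c'.1, c'.2) := by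
      right
      exact ⟨by simp [toNr], by simp [toNr], rfl, hw⟩
    exact (Relation.ReflTransGen.single s1).tail s2
  · refine Relation.ReflTransGen.single (Or.inr ⟨hall, ⟨c'.1, hδ, rfl⟩, rfl, hw⟩)

lemma toNr_run {c c' : Q × List α}
    (h : Relation.ReflTransGen A.Step c c') :
    Relation.ReflTransGen A.toNr.Step ([], Sum.inl c.1, c.2) ([], Sum.inl c'.1, c'.2) := by
  induction h with
  | refl => exact .refl
  | tail _ hstep ih => exact ih.trans (toNr_step hstep)

/-- Backward simulation invariant. -/
def NrInv (A : RNFAwtl Q α) (q₀ : Q) (w : List α) :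
    List α × (Q ⊕ Q) × List α → Prop := fun c =>
  (∃ q v, c = ([], Sum.inl q, v) ∧ Relation.ReflTransGen A.Step (q₀, w) (q, v))
  ∨ (∃ q x v, c = (x, Sum.inr q, v) ∧ Relation.ReflTransGen A.Step (q₀, w) (q, x ++ v))

lemma nrInv_step {q₀ : Q} {w : List α} {c c'} (hc : NrInv A q₀ w c)
    (h : A.toNr.Step c c') : NrInv A q₀ w c' := by
  obtain ⟨x', s', v'⟩ := c'
  rcases hc with ⟨q, v, rfl, hr⟩ | ⟨q, x, v, rfl, hr⟩
  · rcases h with ⟨u, y, t, he, hu, hy, hδ, hx, ht⟩ | ⟨hall, hδ, hx, ht⟩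
    · simp only at he hu hy hδ hx ht
      obtain ⟨p, hp, rfl⟩ := hδ
      right
      refine ⟨p, u, t, by simp [hx, ht], ?_⟩
      refine hr.tail (Or.inl ⟨u, y, t, he, hu, hy, hp, rfl⟩)
    · simp only at hall hδ hx ht
      obtain ⟨p, hp, rfl⟩ := hδ
      left
      refine ⟨p, v, by simp [hx, ht], ?_⟩
      exact hr.tail (Or.inr ⟨hall, hp, rfl⟩)
  · rcases h with ⟨u, y, t, he, hu, hy, hδ, hx, ht⟩ | ⟨hall, hδ, hx, ht⟩
    · simp only at hδ
      simp [toNr] at hδ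
    · simp only at hall hδ hx ht
      simp only [toNr, Set.mem_singleton_iff] at hδ
      subst hδ
      left
      exact ⟨q, x ++ v, by simp [hx, ht], hr⟩

lemma nrInv_run {q₀ : Q} {w : List α} {c c'} (hc : NrInv A q₀ w c)
    (h : Relation.ReflTransGen A.toNr.Step c c') : NrInv A q₀ w c' := by
  induction h with
  | refl => exact hc
  | tail _ hstep ih => exact nrInv_step ih hstep

lemma toNr_lang (A : RNFAwtl Q α) : A.toNr.lang = A.lang := by
  ext w
  constructor
  · rintro ⟨s₀, hs₀, x, s, w', hrun, htr, hF⟩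
    obtain ⟨q₀, hq₀, rfl⟩ := hs₀
    have hinv := nrInv_run (A := A) (Or.inl ⟨q₀, w, rfl, .refl⟩) hrun
    obtain ⟨qf, hqf, he⟩ := hF
    rcases hinv with ⟨q, v, heq, hr⟩ | ⟨q, x₁, v, heq, hr⟩
    · rw [Prod.mk.injEq, Prod.mk.injEq] at heq
      obtain ⟨rfl, hs, rfl⟩ := heq
      have hqq : qf = q := by
        rw [hs] at he
        exact Sum.inl_injective he
      refine ⟨q₀, hq₀, q, w', hr, ?_, hqq ▸ hqf⟩
      intro y hy
      have := htr y hy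
      rw [hs] at this
      exact this
    · rw [Prod.mk.injEq, Prod.mk.injEq] at heq
      obtain ⟨rfl, hs, rfl⟩ := heq
      rw [hs] at he
      simp at he
  · rintro ⟨q₀, hq₀, q, w', hrun, htr, hF⟩
    exact ⟨Sum.inl q₀, ⟨q₀, hq₀, rfl⟩, [], Sum.inl q, w', toNr_run hrun, htr, ⟨q, hF, rfl⟩⟩

lemma toNr_det (hA : A.Deterministic) : A.toNr.Deterministic := by
  obtain ⟨⟨q₀, hq₀⟩, hδ, hδe⟩ := hA
  refine ⟨⟨Sum.inl q₀, by rw [show A.toNr.I = Sum.inl '' A.I from rfl, hq₀]; simp⟩, ?_, ?_⟩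
  · intro s x
    cases s with
    | inl q => exact (hδ q x).image _
    | inr q => exact Set.subsingleton_empty
  · intro s
    cases s with
    | inl q => exact (hδe q).image _
    | inr q => exact Set.subsingleton_singleton
end RNFAwtl


/-- Embedding of NFAwtls into repetitive NFAwtls (no end-of-tape transitions). -/
def NFAwtl.toR {Q α : Type} (A : NFAwtl Q α) : RNFAwtl Q α :=
  ⟨A.τ, A.I, A.δ, fun _ => ∅, A.F, A.tr, fun _ _ => rfl⟩

lemma NFAwtl.toR_step_eq {Q α : Type} (A : NFAwtl Q α) : A.toR.Step = A.Step := by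
  funext c c'
  apply propext
  constructor
  · rintro (h | ⟨-, h, -⟩)
    · exact h
    · simp [toR] at h
  · exact Or.inl

lemma NFAwtl.toR_lang {Q α : Type} (A : NFAwtl Q α) : A.toR.lang = A.lang := by
  ext w
  constructor
  · rintro ⟨q₀, h1, q, w', h2, h3, h4⟩
    exact ⟨q₀, h1, q, w', A.toR_step_eq ▸ h2, h3, h4⟩
  · rintro ⟨q₀, h1, q, w', h2, h3, h4⟩
    exact ⟨q₀, h1, q, w', A.toR_step_eq.symm ▸ h2, h3, h4⟩

/-- ℒ(RDFAwtl) ⊊ ℒ(nr-DFAwtl); the witness L₂ = {aⁿbⁿ} is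
accepted by an nr-DFAwtl but by no NFAwtl, hence by no RDFAwtl. -/
theorem RDFAwtl_ssubset_nrDFAwtl :
    L2 ∈ NrDFAwtlLangs AB ∧ L2 ∉ NFAwtlLangs AB ∧ L2 ∉ RDFAwtlLangs AB ∧
    RDFAwtlLangs AB ⊂ NrDFAwtlLangs AB := by
  have h1 : L2 ∈ NrDFAwtlLangs AB := ⟨St3, inferInstance, M2, M2_det, M2_lang⟩
  have h2 : L2 ∉ NFAwtlLangs AB := by
    rintro ⟨Q, instQ, A, hA⟩
    exact @RNFAwtl_lang_ne_L2 Q instQ A.toR (by rw [NFAwtl.toR_lang, hA])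
  have h3 : L2 ∉ RDFAwtlLangs AB := by
    rintro ⟨Q, instQ, A, hdet, hA⟩
    exact @RNFAwtl_lang_ne_L2 Q instQ A hA
  have hsub : RDFAwtlLangs AB ⊆ NrDFAwtlLangs AB := by
    rintro L ⟨Q, instQ, A, hdet, hA⟩
    haveI := instQ
    exact ⟨Q ⊕ Q, inferInstance, A.toNr, RNFAwtl.toNr_det hdet, by rw [RNFAwtl.toNr_lang, hA]⟩
  exact ⟨h1, h2, h3, hsub, fun hle => h3 (hle h1)⟩
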